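/- arXiv:1009.1266 — 3 statements merged into one kernel-verified Lean document; each statement's English description precedes it below -/
import Mathlib

section
/- Let X be a Banach space, T > 0, A > 0, φ, ψ ∈ X, and let w, v, g : [0, T) → X be continuous functions such that ‖g(τ)‖ ≤ A·‖w(τ)‖ for all τ ∈ [0, T), and such that for all t ∈ [0, T): w(t) = φ + t·ψ + ∫₀ᵗ (t − τ)·g(τ) dτ and v(t) = ψ + ∫₀ᵗ g(τ) dτ. Then for all t ∈ [0, T): ‖w(t)‖ + ‖v(t)‖ ≤ (‖φ‖ + (1 + T)·‖ψ‖) · e^{(1+T)·A·T}. -/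
open Set MeasureTheory intervalIntegral

/-- **Gronwall estimate for the integral equations of `w_tt = Kw`** (Lemma 3.9): if
`‖g(τ)‖ ≤ A‖w(τ)‖` and `w(t) = φ + tψ + ∫₀ᵗ (t-τ) g(τ) dτ`, `v(t) = ψ + ∫₀ᵗ g(τ) dτ`
on `[0,T)`, then `‖w(t)‖ + ‖v(t)‖ ≤ (‖φ‖ + (1+T)‖ψ‖) e^{(1+T)AT}` on `[0,T)`. -/
theorem gronwall_integral_estimate {X : Type*} [NormedAddCommGroup X] [NormedSpace ℝ X]
    [CompleteSpace X] (T A : ℝ) (hT : 0 < T) (hA : 0 < A) (φ ψ : X) (w v g : ℝ → X)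
    (hw : ContinuousOn w (Ico 0 T)) (hv : ContinuousOn v (Ico 0 T))
    (hg : ContinuousOn g (Ico 0 T))
    (hbound : ∀ τ ∈ Ico 0 T, ‖g τ‖ ≤ A * ‖w τ‖)
    (hweq : ∀ t ∈ Ico 0 T, w t = φ + t • ψ + ∫ τ in (0 : ℝ)..t, (t - τ) • g τ)
    (hveq : ∀ t ∈ Ico 0 T, v t = ψ + ∫ τ in (0 : ℝ)..t, g τ) :
    ∀ t ∈ Ico 0 T,
      ‖w t‖ + ‖v t‖ ≤ (‖φ‖ + (1 + T) * ‖ψ‖) * Real.exp ((1 + T) * A * T) := by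
  intro t ht
  obtain ⟨ht0, htT⟩ := ht
  set B : ℝ := ‖φ‖ + (1 + T) * ‖ψ‖ with hB
  set C : ℝ := (1 + T) * A with hC
  have hC0 : 0 < C := mul_pos (by linarith) hA
  have hB0 : 0 ≤ B := by positivity
  -- clamp
  set c : ℝ → ℝ := fun τ => max 0 (min τ t) with hc
  have hc_cont : Continuous c := continuous_const.max (continuous_id.min continuous_const)
  have hc_mem : ∀ τ, c τ ∈ Ico 0 T := by
    intro τ
    refine ⟨le_max_left _ _, ?_⟩
    have : c τ ≤ t := max_le ht0 (min_le_right τ t)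
    exact lt_of_le_of_lt this htT
  -- h τ = ‖w (clamp τ)‖, continuous everywhere
  set h : ℝ → ℝ := fun τ => ‖w (c τ)‖ with hh
  have hh_cont : Continuous h :=
    continuous_norm.comp (hw.comp_continuous hc_cont hc_mem)
  have hh_nonneg : ∀ τ, 0 ≤ h τ := fun τ => norm_nonneg _
  have hc_eq : ∀ s ∈ Icc (0:ℝ) t, c s = s := by
    intro s hs
    simp only [hc]
    rw [min_eq_left hs.2, max_eq_right hs.1]
  -- F s = ∫₀ˢ h
  set F : ℝ → ℝ := fun s => ∫ τ in (0:ℝ)..s, h τ with hF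
  have hF_deriv : ∀ s : ℝ, HasDerivAt F (h s) s := by
    intro s
    exact intervalIntegral.integral_hasDerivAt_right
      (hh_cont.intervalIntegrable 0 s)
      hh_cont.aestronglyMeasurable.stronglyMeasurableAtFilter
      hh_cont.continuousAt
  have hF_cont : Continuous F := by
    have : Differentiable ℝ F := fun s => (hF_deriv s).differentiableAt
    exact this.continuous
  have hF_nonneg : ∀ s ∈ Icc (0:ℝ) t, 0 ≤ F s := by
    intro s hs
    exact intervalIntegral.integral_nonneg hs.1 fun τ _ => hh_nonneg τ
  -- key pointwise estimates
  have hmemIco : ∀ s ∈ Icc (0:ℝ) t, s ∈ Ico (0:ℝ) T :=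
    fun s hs => ⟨hs.1, lt_of_le_of_lt hs.2 htT⟩
  have hTle : t ≤ T := le_of_lt htT
  have key_w : ∀ s ∈ Icc (0:ℝ) t, ‖w s‖ ≤ ‖φ‖ + T * ‖ψ‖ + T * A * F s := by
    intro s hs
    have hsIco := hmemIco s hs
    have hsub : Icc (0:ℝ) s ⊆ Ico 0 T := fun τ hτ =>
      ⟨hτ.1, lt_of_le_of_lt (hτ.2.trans hs.2) htT⟩
    have hgint : IntervalIntegrable (fun τ => (s - τ) • g τ) volume 0 s := by
      apply ContinuousOn.intervalIntegrable
      rw [uIcc_of_le hs.1]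
      exact (continuousOn_const.sub continuousOn_id).smul (hg.mono hsub)
    rw [hweq s hsIco]
    have h1 : ‖φ + s • ψ + ∫ τ in (0:ℝ)..s, (s - τ) • g τ‖ ≤
        ‖φ‖ + ‖s • ψ‖ + ‖∫ τ in (0:ℝ)..s, (s - τ) • g τ‖ := by
      refine (norm_add_le _ _).trans ?_
      gcongr
      exact norm_add_le _ _
    refine h1.trans ?_
    have h2 : ‖s • ψ‖ ≤ T * ‖ψ‖ := by
      rw [norm_smul, Real.norm_eq_abs, abs_of_nonneg hs.1]
      exact mul_le_mul_of_nonneg_right (hs.2.trans hTle) (norm_nonneg _)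
    have h3 : ‖∫ τ in (0:ℝ)..s, (s - τ) • g τ‖ ≤ T * A * F s := by
      refine (intervalIntegral.norm_integral_le_integral_norm hs.1).trans ?_
      have hle : ∀ τ ∈ Icc (0:ℝ) s, ‖(s - τ) • g τ‖ ≤ T * A * h τ := by
        intro τ hτ
        have hτIco := hsub hτ
        rw [norm_smul, Real.norm_eq_abs, abs_of_nonneg (by linarith [hτ.2] : (0:ℝ) ≤ s - τ)]
        have h4 : h τ = ‖w τ‖ := by
          rw [hh]; simp only
          rw [hc_eq τ ⟨hτ.1, hτ.2.trans hs.2⟩]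
        rw [h4]
        have h5 : ‖g τ‖ ≤ A * ‖w τ‖ := hbound τ hτIco
        have h6 : s - τ ≤ T := by linarith [hτ.1, hs.2.trans hTle]
        calc (s - τ) * ‖g τ‖ ≤ T * ‖g τ‖ :=
              mul_le_mul_of_nonneg_right h6 (norm_nonneg _)
          _ ≤ T * (A * ‖w τ‖) := by
              exact mul_le_mul_of_nonneg_left h5 (le_of_lt hT)
          _ = T * A * ‖w τ‖ := by ring
      have hint1 : IntervalIntegrable (fun τ => ‖(s - τ) • g τ‖) volume 0 s := hgint.norm
      have hint2 : IntervalIntegrable (fun τ => T * A * h τ) volume 0 s :=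
        (continuous_const.mul hh_cont).intervalIntegrable 0 s
      calc (∫ τ in (0:ℝ)..s, ‖(s - τ) • g τ‖) ≤ ∫ τ in (0:ℝ)..s, T * A * h τ :=
            intervalIntegral.integral_mono_on hs.1 hint1 hint2 hle
        _ = T * A * F s := by rw [hF]; simp only; rw [intervalIntegral.integral_const_mul]
    linarith
  -- Gronwall
  have gron : F t ≤ gronwallBound 0 C B (t - 0) := by
    apply norm_le_gronwallBound_of_norm_deriv_right_le (f := F) (f' := h)
      hF_cont.continuousOn (fun x _ => (hF_deriv x).hasDerivWithinAt) ?_ ?_ t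
      ⟨ht0, le_rfl⟩ |>.trans_eq' ?_
    · rw [hF]; simp only; rw [intervalIntegral.integral_same]; simp
    · intro x hx
      have hxIcc : x ∈ Icc (0:ℝ) t := ⟨hx.1, le_of_lt hx.2⟩
      have h4 : h x = ‖w x‖ := by rw [hh]; simp only; rw [hc_eq x hxIcc]
      rw [Real.norm_eq_abs, abs_of_nonneg (hh_nonneg x), h4,
        Real.norm_eq_abs, abs_of_nonneg (hF_nonneg x hxIcc)]
      have := key_w x hxIcc
      have hwle : ‖φ‖ + T * ‖ψ‖ ≤ B := by
        rw [hB]; nlinarith [norm_nonneg ψ]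
      have hTAC : T * A ≤ C := by rw [hC]; nlinarith
      nlinarith [hF_nonneg x hxIcc, norm_nonneg (w x)]
    · rw [Real.norm_eq_abs, abs_of_nonneg (hF_nonneg t ⟨ht0, le_rfl⟩)]
  have gronval : F t ≤ B / C * (Real.exp (C * t) - 1) := by
    have : gronwallBound 0 C B (t - 0) = B / C * (Real.exp (C * t) - 1) := by
      rw [gronwallBound_of_K_ne_0 (ne_of_gt hC0)]
      simp [sub_zero]
    linarith [gron.trans_eq this]
  -- final estimate
  have htIco : t ∈ Ico (0:ℝ) T := ⟨ht0, htT⟩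
  have hwt : ‖w t‖ ≤ ‖φ‖ + T * ‖ψ‖ + T * A * F t := key_w t ⟨ht0, le_rfl⟩
  have hvt : ‖v t‖ ≤ ‖ψ‖ + A * F t := by
    rw [hveq t htIco]
    refine (norm_add_le _ _).trans ?_
    gcongr
    refine (intervalIntegral.norm_integral_le_integral_norm ht0).trans ?_
    have hsub : Icc (0:ℝ) t ⊆ Ico 0 T := fun τ hτ => ⟨hτ.1, lt_of_le_of_lt hτ.2 htT⟩
    have hint1 : IntervalIntegrable (fun τ => ‖g τ‖) volume 0 t := by
      apply ContinuousOn.intervalIntegrable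
      rw [uIcc_of_le ht0]
      exact (hg.mono hsub).norm
    have hint2 : IntervalIntegrable (fun τ => A * h τ) volume 0 t :=
      (continuous_const.mul hh_cont).intervalIntegrable 0 t
    have hle : ∀ τ ∈ Icc (0:ℝ) t, ‖g τ‖ ≤ A * h τ := by
      intro τ hτ
      have h4 : h τ = ‖w τ‖ := by rw [hh]; simp only; rw [hc_eq τ hτ]
      rw [h4]
      exact hbound τ (hsub hτ)
    calc (∫ τ in (0:ℝ)..t, ‖g τ‖) ≤ ∫ τ in (0:ℝ)..t, A * h τ :=
          intervalIntegral.integral_mono_on ht0 hint1 hint2 hle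
      _ = A * F t := by rw [hF]; simp only; rw [intervalIntegral.integral_const_mul]
  have hFt : 0 ≤ F t := hF_nonneg t ⟨ht0, le_rfl⟩
  have hsum : ‖w t‖ + ‖v t‖ ≤ B + C * F t := by
    have : ‖φ‖ + T * ‖ψ‖ + ‖ψ‖ ≤ B := by rw [hB]; ring_nf; linarith
    have hTA : T * A + A = C := by rw [hC]; ring
    nlinarith
  have hexp : B + C * F t ≤ B * Real.exp (C * t) := by
    have : C * F t ≤ C * (B / C * (Real.exp (C * t) - 1)) :=
      mul_le_mul_of_nonneg_left gronval (le_of_lt hC0)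
    have heq : C * (B / C * (Real.exp (C * t) - 1)) = B * (Real.exp (C * t) - 1) := by
      field_simp
    rw [heq] at this
    nlinarith [this]
  have hmono : B * Real.exp (C * t) ≤ B * Real.exp (C * T) := by
    apply mul_le_mul_of_nonneg_left _ hB0
    exact Real.exp_le_exp.mpr (mul_le_mul_of_nonneg_left hTle (le_of_lt hC0))
  calc ‖w t‖ + ‖v t‖ ≤ B + C * F t := hsum
    _ ≤ B * Real.exp (C * t) := hexp
    _ ≤ B * Real.exp (C * T) := hmono
    _ = (‖φ‖ + (1 + T) * ‖ψ‖) * Real.exp ((1 + T) * A * T) := by rw [hB, hC]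
end

section
/- Let H be a real Hilbert space, ν > 0, and E₀ < 0. Then there is no twice continuously differentiable function v : [0, ∞) → H satisfying ⟨v''(t), v(t)⟩ ≥ (1 + 2ν)·(‖v'(t)‖² − 2E₀) for all t ≥ 0. -/
open Set
open scoped RealInnerProductSpace

/-- Auxiliary mean-value lemma: a function on `[a, ∞)` with nonnegative derivative
(specified via `HasDerivAt` at interior points) is monotone there. -/
lemma mono_aux {f f' : ℝ → ℝ} {a : ℝ} (hc : ContinuousOn f (Ici a))
    (hd : ∀ t ∈ Ioi a, HasDerivAt f (f' t) t) (h0 : ∀ t ∈ Ioi a, 0 ≤ f' t) :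
    MonotoneOn f (Ici a) := by
  apply monotoneOn_of_deriv_nonneg (convex_Ici a) hc
  · intro t ht
    rw [interior_Ici] at ht
    exact (hd t ht).differentiableAt.differentiableWithinAt
  · intro t ht
    rw [interior_Ici] at ht
    rw [(hd t ht).deriv]
    exact h0 t ht

set_option maxHeartbeats 1000000 in
/-- **Abstract core of the blow-up theorem**: if `ν > 0` and `E₀ < 0`, there is no twice
continuously differentiable `v : [0,∞) → H` with
`⟨v''(t), v(t)⟩ ≥ (1+2ν)(‖v'(t)‖² - 2E₀)` for all `t ≥ 0`. -/
theorem no_global_solution {H : Type*} [NormedAddCommGroup H] [InnerProductSpace ℝ H]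
    (ν E₀ : ℝ) (hν : 0 < ν) (hE₀ : E₀ < 0) :
    ¬ ∃ v : ℝ → H, ContDiffOn ℝ 2 v (Ici 0) ∧
      ∀ t ∈ Ici (0 : ℝ),
        (1 + 2 * ν) * (‖derivWithin v (Ici 0) t‖ ^ 2 - 2 * E₀) ≤
          ⟪derivWithin (derivWithin v (Ici 0)) (Ici 0) t, v t⟫ := by
  rintro ⟨v, hv, hineq⟩
  set v₁ := derivWithin v (Ici 0) with hv₁def
  set v₂ := derivWithin v₁ (Ici 0) with hv₂def
  have hud : UniqueDiffOn ℝ (Ici (0:ℝ)) := uniqueDiffOn_Ici 0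
  have h1 : ∀ t ∈ Ici (0:ℝ), HasDerivWithinAt v (v₁ t) (Ici 0) t := fun t ht =>
    ((hv.differentiableOn (by norm_num)) t ht).hasDerivWithinAt
  have hv1 : ContDiffOn ℝ 1 v₁ (Ici 0) := hv.derivWithin hud (by norm_num)
  have h2 : ∀ t ∈ Ici (0:ℝ), HasDerivWithinAt v₁ (v₂ t) (Ici 0) t := fun t ht =>
    ((hv1.differentiableOn (by norm_num)) t ht).hasDerivWithinAt
  have hvc : ContinuousOn v (Ici (0:ℝ)) := hv.continuousOn
  have hv1c : ContinuousOn v₁ (Ici (0:ℝ)) := hv1.continuousOn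
  set g : ℝ → ℝ := fun t => ⟪v t, v t⟫ with hgdef
  set G : ℝ → ℝ := fun t => 2 * ⟪v t, v₁ t⟫ with hGdef
  set G2 : ℝ → ℝ := fun t => 2 * (⟪v₁ t, v₁ t⟫ + ⟪v t, v₂ t⟫) with hG2def
  have hgc : ContinuousOn g (Ici (0:ℝ)) := hvc.inner hvc
  have hGc : ContinuousOn G (Ici (0:ℝ)) := continuousOn_const.mul (hvc.inner hv1c)
  have hg0 : ∀ t, 0 ≤ g t := fun t => real_inner_self_nonneg
  have hgd : ∀ t ∈ Ici (0:ℝ), HasDerivWithinAt g (G t) (Ici 0) t := by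
    intro t ht
    have h := (h1 t ht).inner ℝ (h1 t ht)
    have heq : ⟪v t, v₁ t⟫ + ⟪v₁ t, v t⟫ = G t := by
      have hcomm : ⟪v₁ t, v t⟫ = ⟪v t, v₁ t⟫ := real_inner_comm _ _
      simp only [hGdef, hcomm]; ring
    rwa [heq] at h
  have hGdw : ∀ t ∈ Ici (0:ℝ), HasDerivWithinAt G (G2 t) (Ici 0) t := by
    intro t ht
    have h := ((h1 t ht).inner ℝ (h2 t ht)).const_mul (2:ℝ)
    have heq : 2 * (⟪v t, v₂ t⟫ + ⟪v₁ t, v₁ t⟫) = G2 t := by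
      simp only [hG2def]; ring
    rwa [heq] at h
  set c : ℝ := -(4 + 8 * ν) * E₀ with hcdef
  have hc : 0 < c := by
    have : 0 < 4 + 8 * ν := by linarith
    rw [hcdef]; nlinarith
  -- the key pointwise bound on the second derivative
  have hbd : ∀ t ∈ Ici (0:ℝ), (4 + 4 * ν) * ⟪v₁ t, v₁ t⟫ + c ≤ G2 t := by
    intro t ht
    have h := hineq t ht
    have hn : ‖v₁ t‖ ^ 2 = ⟪v₁ t, v₁ t⟫ := (real_inner_self_eq_norm_sq _).symm
    rw [hn] at h
    have hsym : ⟪v₂ t, v t⟫ = ⟪v t, v₂ t⟫ := real_inner_comm _ _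
    rw [hsym] at h
    simp only [hG2def, hcdef]
    nlinarith
  have hG2c : ∀ t ∈ Ici (0:ℝ), c ≤ G2 t := by
    intro t ht
    have := hbd t ht
    have h2 : 0 ≤ ⟪v₁ t, v₁ t⟫ := real_inner_self_nonneg
    nlinarith
  -- derivatives as `HasDerivAt` at interior points
  have hgD : ∀ t ∈ Ioi (0:ℝ), HasDerivAt g (G t) t := fun t ht =>
    (hgd t (mem_Ici.mpr (le_of_lt ht))).hasDerivAt (Ici_mem_nhds ht)
  have hGD : ∀ t ∈ Ioi (0:ℝ), HasDerivAt G (G2 t) t := fun t ht =>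
    (hGdw t (mem_Ici.mpr (le_of_lt ht))).hasDerivAt (Ici_mem_nhds ht)
  -- Step 1: G t ≥ G 0 + c * t for t ≥ 0
  have step1 : ∀ t ∈ Ici (0:ℝ), G 0 + c * t ≤ G t := by
    have hm : MonotoneOn (fun t => G t - c * t) (Ici (0:ℝ)) := by
      apply mono_aux (hGc.sub (continuousOn_const.mul continuousOn_id))
      · intro t ht
        exact (hGD t ht).sub ((hasDerivAt_id t).const_mul c)
      · intro t ht
        have := hG2c t (mem_Ici.mpr (le_of_lt ht))
        simp only [mul_one]
        linarith
    intro t ht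
    have := hm (self_mem_Ici) ht ht
    simp only [mul_zero, sub_zero] at this
    linarith
  -- Step 2: pick t₁ ≥ 0 with G ≥ 1 on [t₁, ∞)
  set t₁ : ℝ := max 0 ((1 - G 0) / c) with ht₁def
  have ht₁0 : (0:ℝ) ≤ t₁ := le_max_left _ _
  have hG1 : ∀ t, t₁ ≤ t → 1 ≤ G t := by
    intro t ht
    have ht0 : (0:ℝ) ≤ t := le_trans ht₁0 ht
    have h := step1 t ht0
    have h2 : (1 - G 0) / c ≤ t := le_trans (le_max_right _ _) ht
    have h3 : 1 - G 0 ≤ c * t := by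
      rw [div_le_iff₀ hc] at h2; linarith [mul_comm c t]
    linarith
  -- Step 3: with t₀ = t₁ + 1, g t₀ ≥ 1 (since g' = G ≥ 1 past t₁ and g ≥ 0)
  set t₀ : ℝ := t₁ + 1 with ht₀def
  have ht₀0 : (0:ℝ) ≤ t₀ := by linarith
  have hmg : MonotoneOn (fun t => g t - t) (Ici t₁) := by
    apply mono_aux ((hgc.mono (Ici_subset_Ici.mpr ht₁0)).sub continuousOn_id)
    · intro t ht
      have ht' : (0:ℝ) < t := lt_of_le_of_lt ht₁0 ht
      exact (hgD t ht').sub (hasDerivAt_id t)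
    · intro t ht
      have := hG1 t (le_of_lt ht)
      linarith
  have hg1 : 1 ≤ g t₀ := by
    have h5 : g t₁ - t₁ ≤ g t₀ - t₀ :=
      hmg self_mem_Ici (by simp [ht₀def] : t₀ ∈ Ici t₁) (by linarith)
    have h0 := hg0 t₁
    rw [ht₀def] at h5
    linarith
  -- Step 4: g ≥ 1 and G ≥ 1 on [t₀, ∞)
  have hmg2 : MonotoneOn g (Ici t₁) := by
    apply mono_aux (hgc.mono (Ici_subset_Ici.mpr ht₁0))
    · intro t ht
      exact hgD t (lt_of_le_of_lt ht₁0 ht)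
    · intro t ht
      have := hG1 t (le_of_lt ht)
      linarith
  have hgpos : ∀ t, t₀ ≤ t → 1 ≤ g t := by
    intro t ht
    have := hmg2 (by simp [ht₀def] : t₀ ∈ Ici t₁) (le_trans (by linarith : t₁ ≤ t₀) ht) ht
    linarith
  have hGpos : ∀ t, t₀ ≤ t → 1 ≤ G t := fun t ht => hG1 t (by linarith)
  -- Step 5: k = -(g/G) has k' ≥ ν on (t₀, ∞) but k < 0 everywhere: contradiction
  set k : ℝ → ℝ := fun t => -(g t / G t) with hkdef
  have hkD : ∀ t ∈ Ioi t₀, HasDerivAt k ((g t * G2 t - G t * G t) / (G t)^2) t := by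
    intro t ht
    have ht' : t₀ ≤ t := le_of_lt ht
    have hGne : G t ≠ 0 := by have := hGpos t ht'; linarith
    have ht0 : (0:ℝ) < t := lt_of_le_of_lt ht₀0 ht
    have h := ((hgD t ht0).div (hGD t ht0) hGne).neg
    have heq : -((G t * G t - g t * G2 t) / (G t)^2)
        = (g t * G2 t - G t * G t) / (G t)^2 := by ring
    rwa [heq] at h
  have hk' : ∀ t ∈ Ioi t₀, ν ≤ (g t * G2 t - G t * G t) / (G t)^2 := by
    intro t ht
    have ht' : t₀ ≤ t := le_of_lt ht
    have ht0 : (0:ℝ) ≤ t := le_trans ht₀0 ht'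
    have hgt : 1 ≤ g t := hgpos t ht'
    have hGt : 1 ≤ G t := hGpos t ht'
    have hbdt := hbd t ht0
    have hCS : ⟪v t, v₁ t⟫ * ⟪v t, v₁ t⟫ ≤ ⟪v t, v t⟫ * ⟪v₁ t, v₁ t⟫ :=
      real_inner_mul_inner_self_le _ _
    have hGsq : (0:ℝ) < (G t)^2 := by nlinarith
    rw [le_div_iff₀ hGsq]
    have hgG2 : g t * ((4 + 4*ν) * ⟪v₁ t, v₁ t⟫ + c) ≤ g t * G2 t :=
      mul_le_mul_of_nonneg_left hbdt (hg0 t)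
    have hGexp : G t * G t = 4 * (⟪v t, v₁ t⟫ * ⟪v t, v₁ t⟫) := by
      simp only [hGdef]; ring
    nlinarith [mul_le_mul_of_nonneg_left hCS (by linarith : (0:ℝ) ≤ 4 + 4*ν), hg0 t, hc]
  have hkc : ContinuousOn k (Ici t₀) := by
    apply ContinuousOn.neg
    apply ContinuousOn.div (hgc.mono (Ici_subset_Ici.mpr ht₀0))
      (hGc.mono (Ici_subset_Ici.mpr ht₀0))
    intro t ht
    have := hGpos t ht
    linarith
  have hmk : MonotoneOn (fun t => k t - ν * t) (Ici t₀) := by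
    apply mono_aux (hkc.sub (continuousOn_const.mul continuousOn_id))
    · intro t ht
      exact (hkD t ht).sub ((hasDerivAt_id t).const_mul ν)
    · intro t ht
      have := hk' t ht
      simp only [mul_one]
      linarith
  -- final contradiction at T = t₀ + g t₀ / ν + 1
  obtain ⟨T, hTdef⟩ : ∃ T : ℝ, T = t₀ + g t₀ / ν + 1 := ⟨_, rfl⟩
  have hgt₀ : (0:ℝ) ≤ g t₀ / ν := div_nonneg (hg0 t₀) (le_of_lt hν)
  have hT : t₀ ≤ T := by rw [hTdef]; linarith
  have hmono : k t₀ - ν * t₀ ≤ k T - ν * T := hmk self_mem_Ici (mem_Ici.mpr hT) hT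
  -- k t₀ ≥ -(g t₀)  since G t₀ ≥ 1
  have hkt₀ : -(g t₀) ≤ k t₀ := by
    simp only [hkdef, neg_le_neg_iff]
    rw [div_le_iff₀ (by linarith [hGpos t₀ le_rfl] : (0:ℝ) < G t₀)]
    nlinarith [hGpos t₀ le_rfl, hg0 t₀]
  have hkT : k T < 0 := by
    simp only [hkdef, neg_neg]
    have h1 := hgpos T hT
    have h2 := hGpos T hT
    simp only [Left.neg_neg_iff]
    positivity
  have hνT : ν * T - ν * t₀ = g t₀ + ν := by
    have hν0 : ν ≠ 0 := ne_of_gt hν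
    rw [hTdef]; field_simp; ring
  linarith
end

section
/- Let H be a real Hilbert space, ν > 0, E₀ ∈ ℝ, and let b, t₀ be real numbers with 0 < b ≤ −2E₀ and t₀ ≥ 0. Let v : I → H be twice continuously differentiable on an interval I ⊆ [0, ∞) with ⟨v''(t), v(t)⟩ ≥ (1 + 2ν)·(‖v'(t)‖² − 2E₀) for all t ∈ I, and define ℋ(t) = ‖v(t)‖² + b·(t + t₀)². Then ℋ''(t)·ℋ(t) − (1 + ν)·(ℋ'(t))² ≥ 0 for all t ∈ I. -/
open Set
open scoped RealInnerProductSpace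

/-- **Concavity computation of Theorem 5.2**: for a twice continuously differentiable
`v : I → H` (interval `I ⊆ [0,∞)`) satisfying `⟨v'', v⟩ ≥ (1+2ν)(‖v'‖² - 2E₀)`, and
`0 < b ≤ -2E₀`, `t₀ ≥ 0`, the function `ℋ(t) = ‖v(t)‖² + b(t+t₀)²` (with
`ℋ' = 2⟨v', v⟩ + 2b(t+t₀)` and `ℋ'' = 2‖v'‖² + 2⟨v'', v⟩ + 2b`) satisfies
`ℋ'' ℋ - (1+ν)(ℋ')² ≥ 0` on `I`. -/
theorem concavity_inequality {H : Type*} [NormedAddCommGroup H] [InnerProductSpace ℝ H]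
    (ν E₀ b t₀ : ℝ) (hν : 0 < ν) (hb : 0 < b) (hbE : b ≤ -2 * E₀) (ht₀ : 0 ≤ t₀)
    (I : Set ℝ) (hI : I ⊆ Ici 0) (hI' : I.OrdConnected)
    (v v' v'' : ℝ → H)
    (hv : ∀ t ∈ I, HasDerivAt v (v' t) t)
    (hv' : ∀ t ∈ I, HasDerivAt v' (v'' t) t)
    (hv'' : ContinuousOn v'' I)
    (hineq : ∀ t ∈ I, (1 + 2 * ν) * (‖v' t‖ ^ 2 - 2 * E₀) ≤ ⟪v'' t, v t⟫) :
    ∀ t ∈ I,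
      0 ≤ (2 * ‖v' t‖ ^ 2 + 2 * ⟪v'' t, v t⟫ + 2 * b) * (‖v t‖ ^ 2 + b * (t + t₀) ^ 2)
          - (1 + ν) * (2 * ⟪v' t, v t⟫ + 2 * b * (t + t₀)) ^ 2 := by
  intro t ht
  have hs : 0 ≤ t + t₀ := add_nonneg (hI ht) ht₀
  have h1 := hineq t ht
  have h2 : |⟪v' t, v t⟫| ≤ ‖v' t‖ * ‖v t‖ := abs_real_inner_le_norm _ _
  have hn1 : (0:ℝ) ≤ ‖v' t‖ := norm_nonneg _
  have hn2 : (0:ℝ) ≤ ‖v t‖ := norm_nonneg _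
  set x := ‖v' t‖
  set y := ‖v t‖
  set P : ℝ := ⟪v' t, v t⟫
  set Q : ℝ := ⟪v'' t, v t⟫
  set s := t + t₀
  -- Step 1: second derivative lower bound
  have hA : 4 * (1 + ν) * (x ^ 2 + b) ≤ 2 * x ^ 2 + 2 * Q + 2 * b := by nlinarith
  -- Step 2: Cauchy-Schwarz style bound
  have hCS : (P + b * s) ^ 2 ≤ (x ^ 2 + b) * (y ^ 2 + b * s ^ 2) := by
    have habs : |P + b * s| ≤ x * y + b * s := by
      calc |P + b * s| ≤ |P| + |b * s| := abs_add_le _ _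
        _ ≤ x * y + b * s := by
            have : |b * s| = b * s := abs_of_nonneg (mul_nonneg hb.le hs)
            linarith [h2]
    have h3 : (P + b * s) ^ 2 ≤ (x * y + b * s) ^ 2 := by
      have := abs_nonneg (P + b * s)
      nlinarith [sq_abs (P + b * s), mul_nonneg (mul_nonneg hn1 hn2) (mul_nonneg hb.le hs)]
    nlinarith [sq_nonneg (x * s - y), mul_nonneg hb.le (sq_nonneg (x * s - y))]
  have hH : 0 ≤ y ^ 2 + b * s ^ 2 := by positivity
  have hν1 : (0:ℝ) < 1 + ν := by linarith
  have := mul_le_mul_of_nonneg_right hA hH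
  nlinarith [hCS, mul_le_mul_of_nonneg_left hCS (le_of_lt hν1)]
end
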